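/- With the notation of the block-reduction: define the substitution φ(Y_j) = Π_{S ⊆ E_i, Y_j ∉ S} (1 − Z_i^S), where E_i is the block containing Y_j. Then for every good assignment z of the Z-variables with selected sets S_1,…,S_k, and for every j, φ(Y_j) evaluated at z equals 1 if Y_j ∈ S_i and 0 otherwise; consequently, for any polynomial g(X, Y_1,…,Y_n), Σ_{y∈{0,1}^n} g(X,y) = Σ_{z good} g̃(X, z), where g̃ = g with each Y_j replaced by φ(Y_j). -/

import Mathlib

open scoped Classical

/-- Block reduction substitution. With blocks `E_i` of size `L` and
Z-variables `Z_i^S` for `S ⊆ E_i`, the substitution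
`φ(Y_j) = ∏_{S ⊆ E_i, j ∉ S} (1 - Z_i^S)` (for `j` in block `i`) satisfies: for every
good assignment `z` with selected sets `S_i`, `φ(Y_j)(z) = 1` if `j ∈ S_i` and `0`
otherwise; consequently, for any `g`,
`∑_{y ∈ {0,1}^n} g(X, y) = ∑_{z good} g̃(X, z)` where `g̃` substitutes `φ(Y_j)` for `Y_j`. -/
theorem stmt17 {R : Type*} [CommRing R] (k L : ℕ) :
    (∀ (z : Fin k → Finset (Fin L) → Bool), (∀ i, ∃! S : Finset (Fin L), z i S = true) →
      ∀ (i : Fin k) (Si : Finset (Fin L)), z i Si = true → ∀ j : Fin L,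
        (∏ S ∈ Finset.univ.filter (fun S : Finset (Fin L) => j ∉ S),
            (1 - (if z i S then (1 : R) else 0)))
          = (if j ∈ Si then 1 else 0))
    ∧
    (∀ g : (Fin k → Fin L → R) → R,
      ∑ y : Fin k → Fin L → Bool, g (fun i j => if y i j then 1 else 0)
        = ∑ z ∈ Finset.univ.filter
            (fun z : Fin k → Finset (Fin L) → Bool => ∀ i, ∃! S, z i S = true),
            g (fun i j =>
              ∏ S ∈ Finset.univ.filter (fun S : Finset (Fin L) => j ∉ S),
                (1 - (if z i S then (1 : R) else 0)))) := by
  have key : ∀ (z : Fin k → Finset (Fin L) → Bool), (∀ i, ∃! S : Finset (Fin L), z i S = true) →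
      ∀ (i : Fin k) (Si : Finset (Fin L)), z i Si = true → ∀ j : Fin L,
        (∏ S ∈ Finset.univ.filter (fun S : Finset (Fin L) => j ∉ S),
            (1 - (if z i S then (1 : R) else 0)))
          = (if j ∈ Si then 1 else 0) := by
    intro z hz i Si hSi j
    obtain ⟨S₀, h₀, hu⟩ := hz i
    have hSiS : ∀ S, z i S = true → S = Si := fun S hS => (hu S hS).trans (hu Si hSi).symm
    by_cases hj : j ∈ Si
    · rw [if_pos hj]
      apply Finset.prod_eq_one
      intro S hS
      simp only [Finset.mem_filter] at hS
      have : z i S = false := by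
        cases h : z i S
        · rfl
        · exact absurd (hSiS S h ▸ hj) hS.2
      simp [this]
    · rw [if_neg hj]
      apply Finset.prod_eq_zero (i := Si)
      · simp [hj]
      · simp [hSi]
  refine ⟨key, ?_⟩
  intro g
  have huniv : (Finset.univ : Finset (Fin k → Fin L → Bool))
      = Finset.univ := rfl
  refine Finset.sum_bij'
    (i := fun (y : Fin k → Fin L → Bool) (_ : y ∈ Finset.univ) =>
      fun i S => decide (S = Finset.univ.filter (fun j => y i j = true)))
    (j := fun (z : Fin k → Finset (Fin L) → Bool) _ =>
      fun i j => decide (∃ S, z i S = true ∧ j ∈ S))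
    ?_ ?_ ?_ ?_ ?_
  · -- forward maps into good set
    intro y _
    simp only [Finset.mem_filter, Finset.mem_univ, true_and]
    intro i
    refine ⟨Finset.univ.filter (fun j => y i j = true), by simp, ?_⟩
    intro S hS
    simpa using hS
  · -- backward maps into univ
    intro z _
    exact Finset.mem_univ _
  · -- left inverse
    intro y _
    funext i j
    simp only [decide_eq_true_eq]
    by_cases h : y i j = true
    · simp [h]
    · simp only [Bool.not_eq_true] at h
      simp [h]
  · -- right inverse
    intro z hz
    simp only [Finset.mem_filter, Finset.mem_univ, true_and] at hz
    funext i S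
    obtain ⟨S₀, h₀, hu⟩ := hz i
    have hmem : Finset.univ.filter
        (fun j => decide (∃ S, z i S = true ∧ j ∈ S) = true) = S₀ := by
      ext j
      simp only [Finset.mem_filter, Finset.mem_univ, true_and, decide_eq_true_eq]
      constructor
      · rintro ⟨S, hS, hjS⟩
        rwa [hu S hS] at hjS
      · intro hj
        exact ⟨S₀, h₀, hj⟩
    simp only [hmem]
    by_cases h : S = S₀
    · simp [h, h₀]
    · have : z i S = false := by
        cases hS : z i S
        · rfl
        · exact absurd (hu S hS) h
      simp [h, this]
  · -- values agree
    intro y _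
    congr 1
    funext i j
    have hgood : ∀ i, ∃! S : Finset (Fin L),
        (decide (S = Finset.univ.filter (fun j => y i j = true)) : Bool) = true := by
      intro i
      exact ⟨Finset.univ.filter (fun j => y i j = true), by simp, fun S hS => by simpa using hS⟩
    have := key (fun i S => decide (S = Finset.univ.filter (fun j => y i j = true))) hgood
      i (Finset.univ.filter (fun j => y i j = true)) (by simp) j
    rw [this]
    by_cases h : y i j = true
    · simp [h]
    · simp only [Bool.not_eq_true] at h
      simp [h]
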